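/- Let R = Q[[q]] and let D = q·d/dq be the derivation on R. Suppose F : Z^{≥0} × Z^{≥0} → qR satisfies (i) F(b1, b2) = F(b2, b1) for all b1, b2, and (ii) D F(b1, b2) = D F(b1, 0) · F(0, b2 − 1) for all b1 ≥ 0 and b2 ≥ 1. Then for all b1, b2 ≥ 0, F(b1, b2) = [1/(b1+b2+1)!] · C(b1+b2, b1) · F(0,0)^{b1+b2+1}. -/

import Mathlib

noncomputable section

open PowerSeries in
lemma aux_deriv_smul_pow (G : PowerSeries ℚ) (c : ℚ) (n : ℕ) :
    PowerSeries.derivative ℚ (c • G ^ (n+1)) =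
      ((n+1 : ℚ) * c) • (G ^ n * PowerSeries.derivative ℚ G) := by
  rw [Derivation.map_smul, Derivation.leibniz_pow]
  simp only [Nat.add_sub_cancel, smul_eq_mul, nsmul_eq_mul,
    PowerSeries.smul_eq_C_mul, map_mul, map_add, map_natCast, map_one]
  push_cast
  ring

/-- Let `R = ℚ[[q]]` and `D = q⬝d/dq`. If `F : ℕ × ℕ → qR` is symmetric and satisfies
`D F(b1,b2) = D F(b1,0) ⬝ F(0,b2-1)` for `b2 ≥ 1`, then
`F(b1,b2) = C(b1+b2,b1)/(b1+b2+1)! ⬝ F(0,0)^{b1+b2+1}`. -/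
theorem stmt_8 (F : ℕ → ℕ → PowerSeries ℚ)
    (h0 : ∀ b1 b2, PowerSeries.constantCoeff (F b1 b2) = 0)
    (hsym : ∀ b1 b2, F b1 b2 = F b2 b1)
    (hrec : ∀ b1 b2, 1 ≤ b2 →
      PowerSeries.X * PowerSeries.derivative ℚ (F b1 b2) =
        PowerSeries.X * PowerSeries.derivative ℚ (F b1 0) * F 0 (b2 - 1)) :
    ∀ b1 b2, F b1 b2 =
      (((b1 + b2).choose b1 : ℚ) / (b1 + b2 + 1).factorial) • F 0 0 ^ (b1 + b2 + 1) := by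
  have hcancel : ∀ {f g : PowerSeries ℚ},
      PowerSeries.X * f = PowerSeries.X * g → f = g := by
    intro f g h
    exact mul_left_cancel₀ PowerSeries.X_ne_zero h
  set G := F 0 0 with hG
  set dG := PowerSeries.derivative ℚ G with hdG
  have hc0 : ∀ (c : ℚ) (n : ℕ),
      PowerSeries.constantCoeff (c • G ^ (n+1)) = 0 := by
    intro c n
    simp [map_smul, map_pow, h0 0 0, hG]
  -- step 1 : F 0 b = (1/(b+1)!) • G^(b+1)
  have key : ∀ b, F 0 b = ((1:ℚ) / (b+1).factorial) • G ^ (b+1) := by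
    intro b
    induction b with
    | zero => simp [hG]
    | succ b ih =>
      apply PowerSeries.derivative.ext (R := ℚ)
      · apply hcancel
        rw [aux_deriv_smul_pow]
        have h := hrec 0 (b+1) (by omega)
        simp only [Nat.add_sub_cancel] at h
        rw [h, ih, ← hG, ← hdG]
        have hs : ((b:ℚ)+1+1) * ((1:ℚ)/((b+1+1).factorial)) = 1 / (b+1).factorial := by
          have e : ((b+1+1).factorial : ℚ) = ((b:ℚ)+1+1) * (b+1).factorial := by
            rw [Nat.factorial_succ]; push_cast; ring
          have n1 : ((b+1).factorial : ℚ) ≠ 0 := by positivity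
          have n2 : ((b:ℚ)+1+1) ≠ 0 := by positivity
          rw [e]; field_simp
        push_cast
        rw [hs]
        simp only [PowerSeries.smul_eq_C_mul]
        ring
      · rw [h0, hc0]
  have keyG : ∀ b, PowerSeries.derivative ℚ (F b 0) =
      (((b:ℚ)+1) * ((1:ℚ)/(b+1).factorial)) • (G ^ b * dG) := by
    intro b
    rw [hsym b 0, key b, aux_deriv_smul_pow, ← hdG]
  intro b1 b2
  match b2 with
  | 0 =>
    rw [hsym b1 0, key b1]
    norm_num
  | (m+1) =>
    apply PowerSeries.derivative.ext (R := ℚ)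
    · apply hcancel
      have h := hrec b1 (m+1) (by omega)
      simp only [Nat.add_sub_cancel] at h
      rw [h, key m, keyG b1]
      rw [show b1 + (m+1) + 1 = (b1 + m + 1) + 1 from by omega, aux_deriv_smul_pow, ← hdG]
      rw [show b1 + m + 1 = b1 + (m+1) from by omega, pow_add]
      have hq : (((b1+(m+1)).choose b1 : ℚ)) * b1.factorial * (m+1).factorial
          = ((b1+(m+1)).factorial : ℚ) := by
        have h1 := Nat.add_choose_mul_factorial_mul_factorial b1 (m+1)
        have h2 := Nat.choose_symm (Nat.le_add_right b1 (m+1))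
        rw [Nat.add_sub_cancel_left] at h2
        rw [h2] at h1
        exact_mod_cast h1
      have e1 : ((b1+1).factorial:ℚ) = ((b1:ℚ)+1)*b1.factorial := by
        rw [Nat.factorial_succ]; push_cast; ring
      have e2 : ((b1+(m+1)+1).factorial:ℚ) = ((b1:ℚ)+m+2)*((b1+(m+1)).factorial) := by
        rw [Nat.factorial_succ]; push_cast; ring
      have n1 : (b1.factorial:ℚ) ≠ 0 := by positivity
      have n2 : ((m+1).factorial:ℚ) ≠ 0 := by positivity
      have n3 : (((b1+(m+1)).factorial):ℚ) ≠ 0 := by positivity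
      have n4 : ((b1:ℚ)+1) ≠ 0 := by positivity
      have n5 : ((b1:ℚ)+m+2) ≠ 0 := by positivity
      have hs : ((b1:ℚ)+(m+1)+1) * (((b1+(m+1)).choose b1 : ℚ)/((b1+(m+1)+1).factorial))
          = (((b1:ℚ)+1) * ((1:ℚ)/(b1+1).factorial)) * ((1:ℚ)/((m+1).factorial)) := by
        rw [e1, e2]
        field_simp
        linear_combination ((b1:ℚ)+m+2) * hq
      push_cast at hs ⊢
      rw [hs]
      simp only [PowerSeries.smul_eq_C_mul, map_mul]
      ring
    · rw [h0]
      rw [show b1 + (m+1) + 1 = (b1 + m + 1) + 1 from by omega, hc0]
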